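/- Let v > 0, η > 0 and let n be a positive integer with 1/n < η. With μ₂* and φ_n defined as in the context, there exists a constant C ≥ 0 such that for all r > 0 and all θ₁, θ₂ ∈ ℝ: φ_n(r)·(θ₁ − θ₂)·(μ₂*(r,θ₁) − μ₂*(r,θ₂)) ≤ C·(θ₁ − θ₂)². -/

import Mathlib

open Real

/-- Reduce an angle to the base interval `[-π/4, 7π/4)`. -/
noncomputable def wrapBase (θ : ℝ) : ℝ := toIcoMod Real.two_pi_pos (-(π / 4)) θ

/-- Radial drift on starboard tack (`a = +1`), `2π`-periodic in `θ`. -/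
noncomputable def mu1plus (v θ : ℝ) : ℝ :=
  if wrapBase θ < π / 2 then -v * Real.sin (wrapBase θ)
  else if wrapBase θ < π then -v
  else v * Real.cos (wrapBase θ)

/-- Angular drift on starboard tack (`a = +1`), `2π`-periodic in `θ`. -/
noncomputable def mu2plus (v r θ : ℝ) : ℝ :=
  if wrapBase θ < π / 2 then -v * Real.cos (wrapBase θ) / r
  else if wrapBase θ < π then 0
  else -v * Real.sin (wrapBase θ) / r

/-- Radial drift on port tack (`a = −1`), `2π`-periodic in `θ`. -/
noncomputable def mu1minus (v θ : ℝ) : ℝ :=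
  if wrapBase θ < 0 then -v
  else if wrapBase θ < 3 * π / 4 then -v * Real.cos (wrapBase θ)
  else if wrapBase θ < 3 * π / 2 then v * Real.sin (wrapBase θ)
  else -v

/-- Angular drift on port tack (`a = −1`), `2π`-periodic in `θ`. -/
noncomputable def mu2minus (v r θ : ℝ) : ℝ :=
  if wrapBase θ < 0 then 0
  else if wrapBase θ < 3 * π / 4 then v * Real.sin (wrapBase θ) / r
  else if wrapBase θ < 3 * π / 2 then v * Real.cos (wrapBase θ) / r
  else 0

/-- Reduce an angle to the interval `[-3π/4, 5π/4)`. -/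
noncomputable def wrapStar (θ : ℝ) : ℝ := toIcoMod Real.two_pi_pos (-(3 * π / 4)) θ

/-- Radial drift of the candidate optimal feedback strategy: starboard for
`θ ∈ [π/4, 5π/4)`, port for `θ ∈ [−3π/4, π/4)`, extended `2π`-periodically. -/
noncomputable def mu1star (v θ : ℝ) : ℝ :=
  if wrapStar θ < π / 4 then mu1minus v (wrapStar θ) else mu1plus v (wrapStar θ)

/-- Angular drift of the candidate optimal feedback strategy: starboard for
`θ ∈ [π/4, 5π/4)`, port for `θ ∈ [−3π/4, π/4)`, extended `2π`-periodically. -/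
noncomputable def mu2star (v r θ : ℝ) : ℝ :=
  if wrapStar θ < π / 4 then mu2minus v r (wrapStar θ) else mu2plus v r (wrapStar θ)

/-- The damping function `φ_n`: `0` on `[0, η − 1/n]`, linear on `(η − 1/n, η)`,
and `1` on `[η, ∞)`. -/
noncomputable def phiDamp (η : ℝ) (n : ℕ) (r : ℝ) : ℝ :=
  if r ≤ η - 1 / n then 0 else if r < η then n * (r - η) + 1 else 1


lemma my_abs_sin_le (x : ℝ) : |Real.sin x| ≤ |x| := by
  have key : ∀ y : ℝ, 0 ≤ y → |Real.sin y| ≤ y := by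
    intro y hy
    rw [abs_le]
    refine ⟨?_, Real.sin_le hy⟩
    rcases le_or_gt y π with h2 | h2
    · nlinarith [Real.sin_nonneg_of_nonneg_of_le_pi hy h2]
    · nlinarith [Real.neg_one_le_sin y, Real.pi_gt_three]
  rcases le_or_gt 0 x with h | h
  · rw [abs_of_nonneg h]; exact key x h
  · rw [abs_of_neg h]
    have := key (-x) (by linarith)
    rwa [Real.sin_neg, abs_neg] at this

lemma my_cos_lip (a b : ℝ) : |Real.cos a - Real.cos b| ≤ |a - b| := by
  rw [Real.cos_sub_cos]
  have h1 : |Real.sin ((a + b) / 2)| ≤ 1 := abs_le.2 ⟨Real.neg_one_le_sin _, Real.sin_le_one _⟩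
  have h2 : |Real.sin ((a - b) / 2)| ≤ |a - b| / 2 := by
    have := my_abs_sin_le ((a - b) / 2)
    rwa [abs_div, abs_two] at this
  calc |(-2) * Real.sin ((a + b) / 2) * Real.sin ((a - b) / 2)|
      = 2 * (|Real.sin ((a + b) / 2)| * |Real.sin ((a - b) / 2)|) := by
        rw [abs_mul, abs_mul]; simp [mul_assoc]
    _ ≤ 2 * (1 * (|a - b| / 2)) := by
        gcongr
    _ = |a - b| := by ring

lemma my_sin_lip (a b : ℝ) : |Real.sin a - Real.sin b| ≤ |a - b| := by
  rw [Real.sin_sub_sin]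
  have h1 : |Real.cos ((a + b) / 2)| ≤ 1 := abs_le.2 ⟨Real.neg_one_le_cos _, Real.cos_le_one _⟩
  have h2 : |Real.sin ((a - b) / 2)| ≤ |a - b| / 2 := by
    have := my_abs_sin_le ((a - b) / 2)
    rwa [abs_div, abs_two] at this
  calc |2 * Real.sin ((a - b) / 2) * Real.cos ((a + b) / 2)|
      = 2 * (|Real.sin ((a - b) / 2)| * |Real.cos ((a + b) / 2)|) := by
        rw [abs_mul, abs_mul]; simp [mul_assoc]
    _ ≤ 2 * ((|a - b| / 2) * 1) := by
        gcongr
    _ = |a - b| := by ring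


noncomputable def Gaux (s : ℝ) : ℝ :=
  if s < π / 2 then -Real.cos s else if s < π then 0 else -Real.sin s


lemma sin_nonpos_shift {b : ℝ} (hb1 : π ≤ b) (hb2 : b < 5 * π / 4) : Real.sin b ≤ 0 := by
  have h := Real.sin_nonneg_of_nonneg_of_le_pi (x := b - π) (by linarith)
    (by nlinarith [Real.pi_pos])
  rw [Real.sin_sub_pi] at h
  linarith

lemma Gaux_mono {a b : ℝ} (ha : π / 4 ≤ a) (hab : a ≤ b) (hb : b < 5 * π / 4) :
    Gaux a ≤ Gaux b := by
  have hpi := Real.pi_pos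
  unfold Gaux
  split_ifs with h1 h2 h3 h4 h5 h6 h7 h8
  · have := Real.cos_le_cos_of_nonneg_of_le_pi (x := a) (y := b) (by linarith) (by linarith) hab
    linarith
  · have := Real.cos_nonneg_of_mem_Icc (x := a) ⟨by linarith, by linarith⟩
    linarith
  · have h5 := sin_nonpos_shift (by linarith) hb
    have := Real.cos_nonneg_of_mem_Icc (x := a) ⟨by linarith, by linarith⟩
    linarith
  · linarith
  · exact le_rfl
  · have := sin_nonpos_shift (by linarith) hb
    linarith
  · linarith
  · linarith
  · have hmono := Real.sin_le_sin_of_le_of_le_pi_div_two (x := a - π) (y := b - π)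
      (by linarith) (by nlinarith) (by linarith)
    rw [Real.sin_sub_pi, Real.sin_sub_pi] at hmono
    linarith

lemma Gaux_lip {a b : ℝ} (ha : π / 4 ≤ a) (hab : a ≤ b) (hb : b < 5 * π / 4) :
    Gaux b - Gaux a ≤ b - a := by
  have hpi := Real.pi_pos
  have hca : Real.cos a ≤ |a - π / 2| := by
    have := my_cos_lip a (π / 2)
    rw [Real.cos_pi_div_two, sub_zero] at this
    exact (le_abs_self _).trans this
  have hsb : -Real.sin b ≤ |b - π| := by
    have := my_sin_lip π b
    rw [Real.sin_pi, zero_sub, abs_neg, abs_sub_comm] at this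
    exact (neg_le_abs _).trans this
  have hcc : Real.cos a - Real.cos b ≤ |a - b| := (le_abs_self _).trans (my_cos_lip a b)
  have hss : Real.sin a - Real.sin b ≤ |a - b| := (le_abs_self _).trans (my_sin_lip a b)
  have hab' : |a - b| = b - a := by rw [abs_sub_comm]; exact abs_of_nonneg (by linarith)
  rw [hab'] at hcc hss
  unfold Gaux
  split_ifs with h1 h2 h3 h4 h5 h6 h7 h8
  -- order: conditions on b first, then on a
  · linarith
  · -- b < π/2, ¬a<π/2, a<π : impossible since a ≤ b
    linarith
  · linarith
  · -- ¬b<π/2, b<π, a<π/2 : 0 - (-cos a) ≤ b - a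
    have : |a - π / 2| = π / 2 - a := by rw [abs_of_nonpos (by linarith)]; ring
    rw [this] at hca; linarith
  · linarith
  · linarith
  · -- ¬b<π, a<π/2 : -sin b + cos a ≤ b - a
    have h1' : |a - π / 2| = π / 2 - a := by rw [abs_of_nonpos (by linarith)]; ring
    have h2' : |b - π| = b - π := abs_of_nonneg (by linarith)
    rw [h1'] at hca; rw [h2'] at hsb; linarith
  · -- ¬b<π, π/2≤a<π : -sin b ≤ b - a
    have h2' : |b - π| = b - π := abs_of_nonneg (by linarith)
    rw [h2'] at hsb; linarith
  · linarith

lemma Gaux_abs {s : ℝ} : |Gaux s| ≤ 1 := by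
  unfold Gaux
  split_ifs
  · rw [abs_neg]; exact abs_le.2 ⟨Real.neg_one_le_cos _, Real.cos_le_one _⟩
  · simp
  · rw [abs_neg]; exact abs_le.2 ⟨Real.neg_one_le_sin _, Real.sin_le_one _⟩

lemma wrapBase_eq_self {x : ℝ} (h1 : -(π / 4) ≤ x) (h2 : x < 7 * π / 4) : wrapBase x = x := by
  apply (toIcoMod_eq_self _).2
  constructor
  · exact h1
  · linarith

lemma mu2star_eq (v r θ : ℝ) :
    mu2star v r θ = v * Gaux (toIcoMod Real.pi_pos (π / 4) θ) / r := by
  have hpi := Real.pi_pos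
  set w := toIcoMod Real.pi_pos (π / 4) θ with hw_def
  have hw : w ∈ Set.Ico (π / 4) (π / 4 + π) := toIcoMod_mem_Ico _ _ _
  obtain ⟨hw1, hw2⟩ := hw
  set s := wrapStar θ with hs_def
  have hs : s ∈ Set.Ico (-(3 * π / 4)) (-(3 * π / 4) + 2 * π) :=
    toIcoMod_mem_Ico _ _ _
  obtain ⟨hs1, hs2⟩ := hs
  -- s - w is an integer multiple of π
  have hmw : θ - w = (toIcoDiv Real.pi_pos (π / 4) θ : ℤ) • π := self_sub_toIcoMod _ _ _
  have hms : θ - s = (toIcoDiv Real.two_pi_pos (-(3 * π / 4)) θ : ℤ) • (2 * π) :=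
    self_sub_toIcoMod _ _ _
  set m := toIcoDiv Real.pi_pos (π / 4) θ
  set k := toIcoDiv Real.two_pi_pos (-(3 * π / 4)) θ
  have hdiff : s - w = ((m - 2 * k : ℤ) : ℝ) * π := by
    have h1 : θ - w = (m : ℝ) * π := by rw [hmw]; simp [zsmul_eq_mul]
    have h2 : θ - s = (k : ℝ) * (2 * π) := by rw [hms]; simp [zsmul_eq_mul]
    push_cast
    linarith
  set j : ℤ := m - 2 * k with hj_def
  have hjcases : j = 0 ∨ j = -1 := by
    have hb1 : ((j : ℝ)) * π < π := by rw [← hdiff] at *; nlinarith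
    have hb2 : (-2 : ℝ) * π < (j : ℝ) * π := by nlinarith [hdiff, hs1, hw2]
    have h1 : (j : ℝ) < 1 := by
      by_contra h
      push_neg at h
      nlinarith
    have h2 : (-2 : ℝ) < (j : ℝ) := by
      by_contra h
      push_neg at h
      nlinarith
    have h1' : j < 1 := by exact_mod_cast h1
    have h2' : (-2 : ℤ) < j := by exact_mod_cast h2
    omega
  rcases hjcases with hj | hj
  · -- s = w, starboard branch
    have hsw : s = w := by
      have := hdiff
      rw [hj] at this
      push_cast at this
      linarith
    rw [mu2star, ← hs_def, if_neg (by rw [hsw]; push_neg; linarith)]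
    rw [mu2plus, hsw, wrapBase_eq_self (by linarith) (by linarith)]
    unfold Gaux
    split_ifs with h1 h2
    · ring
    · simp
    · ring
  · -- s = w - π, port branch
    have hsw : s = w - π := by
      have := hdiff
      rw [hj] at this
      push_cast at this
      linarith
    rw [mu2star, ← hs_def, if_pos (by rw [hsw]; linarith)]
    rw [mu2minus]
    rcases le_or_gt (-(π / 4)) s with hcase | hcase
    · -- s ∈ [-π/4, π/4), i.e. w ∈ [3π/4, 5π/4)
      rw [wrapBase_eq_self hcase (by linarith)]
      have hw34 : 3 * π / 4 ≤ w := by rw [hsw] at hcase; linarith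
      rcases lt_or_ge s 0 with hneg | hpos
      · -- w ∈ [3π/4, π) : Gaux w = 0
        have hwlt : w < π := by rw [hsw] at hneg; linarith
        rw [if_pos hneg]
        rw [Gaux, if_neg (by push_neg; linarith), if_pos hwlt]
        simp
      · -- s ∈ [0, π/4), w ∈ [π, 5π/4)
        have hwpi : π ≤ w := by rw [hsw] at hpos; linarith
        rw [if_neg (not_lt.2 hpos), if_pos (by rw [hsw]; linarith)]
        rw [Gaux, if_neg (by push_neg; linarith), if_neg (not_lt.2 hwpi)]
        rw [hsw, Real.sin_sub_pi]
    · -- s ∈ [-3π/4, -π/4), wrapBase s = s + 2π ∈ [5π/4, 7π/4)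
      have hwb : wrapBase s = s + 2 * π := by
        rw [wrapBase, ← toIcoMod_add_right]
        exact wrapBase_eq_self (by linarith) (by linarith)
      rw [hwb]
      rw [if_neg (by push_neg; linarith), if_neg (by push_neg; linarith)]
      rcases lt_or_ge (s + 2 * π) (3 * π / 2) with hlt | hge
      · -- w < π/2
        rw [if_pos hlt]
        have hwlt : w < π / 2 := by rw [hsw] at hlt; linarith
        rw [Gaux, if_pos hwlt]
        rw [Real.cos_add_two_pi, hsw, Real.cos_sub_pi]
      · -- w ∈ [π/2, 3π/4) : Gaux w = 0
        rw [if_neg (not_lt.2 hge)]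
        have hw1' : π / 2 ≤ w := by rw [hsw] at hge; linarith
        rw [Gaux, if_neg (not_lt.2 hw1'), if_pos (by rw [hsw] at hcase; linarith)]
        simp

lemma Gaux_onesided {θ₁ θ₂ : ℝ} (h : θ₂ ≤ θ₁) :
    Gaux (toIcoMod Real.pi_pos (π / 4) θ₁) - Gaux (toIcoMod Real.pi_pos (π / 4) θ₂)
      ≤ θ₁ - θ₂ := by
  have hpi := Real.pi_gt_three
  set w₁ := toIcoMod Real.pi_pos (π / 4) θ₁ with hw1_def
  set w₂ := toIcoMod Real.pi_pos (π / 4) θ₂ with hw2_def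
  obtain ⟨ha1, ha2⟩ := toIcoMod_mem_Ico Real.pi_pos (π / 4) θ₁
  obtain ⟨hb1, hb2⟩ := toIcoMod_mem_Ico Real.pi_pos (π / 4) θ₂
  rcases le_or_gt 2 (θ₁ - θ₂) with hbig | hsmall
  · have h1 := abs_le.1 (Gaux_abs (s := w₁))
    have h2 := abs_le.1 (Gaux_abs (s := w₂))
    linarith [h1.1, h1.2, h2.1, h2.2]
  · have hm1 : θ₁ - w₁ = ((toIcoDiv Real.pi_pos (π / 4) θ₁ : ℤ) : ℝ) * π := by
      have := self_sub_toIcoMod Real.pi_pos (π / 4) θ₁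
      rw [this]; simp [zsmul_eq_mul]
    have hm2 : θ₂ - w₂ = ((toIcoDiv Real.pi_pos (π / 4) θ₂ : ℤ) : ℝ) * π := by
      have := self_sub_toIcoMod Real.pi_pos (π / 4) θ₂
      rw [this]; simp [zsmul_eq_mul]
    set j : ℤ := toIcoDiv Real.pi_pos (π / 4) θ₁ - toIcoDiv Real.pi_pos (π / 4) θ₂ with hj_def
    have hdiff : w₁ - w₂ = (θ₁ - θ₂) - (j : ℝ) * π := by
      push_cast [hj_def]
      nlinarith [hm1, hm2]
    have hjcases : j = 0 ∨ j = 1 := by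
      have hd0 : 0 ≤ θ₁ - θ₂ := by linarith
      have hl : (j : ℝ) * π < (θ₁ - θ₂) + π := by nlinarith [hdiff, ha1, hb2]
      have hr : (θ₁ - θ₂) - π < (j : ℝ) * π := by nlinarith [hdiff, ha2, hb1]
      have h1 : (j : ℝ) < 2 := by nlinarith
      have h2 : (-1 : ℝ) < (j : ℝ) := by nlinarith
      have h1' : j < 2 := by exact_mod_cast h1
      have h2' : (-1 : ℤ) < j := by exact_mod_cast h2
      omega
    rcases hjcases with hj | hj
    · have hsw : w₁ - w₂ = θ₁ - θ₂ := by rw [hj] at hdiff; push_cast at hdiff; linarith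
      have := Gaux_lip (a := w₂) (b := w₁) hb1 (by linarith) (by linarith)
      linarith
    · have hsw : w₁ - w₂ = θ₁ - θ₂ - π := by rw [hj] at hdiff; push_cast at hdiff; linarith
      have := Gaux_mono (a := w₁) (b := w₂) ha1 (by linarith) (by linarith)
      linarith


/-- **One-sided quadratic estimate in the angular variable.**
Although `θ ↦ μ₂*(r,θ)` is discontinuous at the points `π/4 + kπ`, the damped
angular drift satisfies a one-sided quadratic estimate uniformly in `r`, because at
each discontinuity the jump has the favorable sign. -/
theorem angular_drift_one_sided_estimate
    (v η : ℝ) (hv : 0 < v) (hη : 0 < η) (n : ℕ) (hn : 0 < n) (hnη : 1 / (n : ℝ) < η) :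
    ∃ C : ℝ, 0 ≤ C ∧ ∀ r θ₁ θ₂ : ℝ, 0 < r →
      phiDamp η n r * ((θ₁ - θ₂) * (mu2star v r θ₁ - mu2star v r θ₂))
        ≤ C * (θ₁ - θ₂) ^ 2 := by
  have hnpos : (0 : ℝ) < (n : ℝ) := by exact_mod_cast hn
  have hden : 0 < η - 1 / (n : ℝ) := by linarith
  refine ⟨v / (η - 1 / (n : ℝ)), div_nonneg hv.le hden.le, ?_⟩
  intro r θ₁ θ₂ hr
  rw [mu2star_eq, mu2star_eq]
  set G₁ := Gaux (toIcoMod Real.pi_pos (π / 4) θ₁) with hG1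
  set G₂ := Gaux (toIcoMod Real.pi_pos (π / 4) θ₂) with hG2
  have hrne : r ≠ 0 := ne_of_gt hr
  have hrw : phiDamp η n r * ((θ₁ - θ₂) * (v * G₁ / r - v * G₂ / r))
      = (phiDamp η n r * v / r) * ((θ₁ - θ₂) * (G₁ - G₂)) := by
    field_simp
  have key : (θ₁ - θ₂) * (G₁ - G₂) ≤ (θ₁ - θ₂) ^ 2 := by
    rcases le_total θ₂ θ₁ with h | h
    · have h1 := Gaux_onesided (θ₁ := θ₁) (θ₂ := θ₂) h
      nlinarith [sub_nonneg.2 h]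
    · have h1 := Gaux_onesided (θ₁ := θ₂) (θ₂ := θ₁) h
      nlinarith [sub_nonneg.2 h]
  have hphi0 : 0 ≤ phiDamp η n r := by
    unfold phiDamp
    split_ifs with h1 h2
    · exact le_rfl
    · push_neg at h1
      have : (n : ℝ) * (r - η) ≥ (n : ℝ) * (-(1 / n)) := by
        apply mul_le_mul_of_nonneg_left _ hnpos.le
        linarith
      have h3 : (n : ℝ) * (-(1 / (n : ℝ))) = -1 := by field_simp
      linarith
    · exact zero_le_one
  have hc0 : 0 ≤ phiDamp η n r * v / r := div_nonneg (mul_nonneg hphi0 hv.le) hr.le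
  have hcC : phiDamp η n r * v / r ≤ v / (η - 1 / (n : ℝ)) := by
    rcases le_or_gt r (η - 1 / (n : ℝ)) with hrs | hrs
    · have : phiDamp η n r = 0 := by rw [phiDamp, if_pos hrs]
      rw [this]
      simp only [zero_mul, zero_div]
      exact div_nonneg hv.le hden.le
    · have hphile : phiDamp η n r ≤ 1 := by
        unfold phiDamp
        split_ifs with h1 h2
        · exact zero_le_one
        · nlinarith
        · exact le_rfl
      calc phiDamp η n r * v / r ≤ 1 * v / r := by gcongr
        _ = v / r := by ring
        _ ≤ v / (η - 1 / (n : ℝ)) := by gcongr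
  calc phiDamp η n r * ((θ₁ - θ₂) * (v * G₁ / r - v * G₂ / r))
      = (phiDamp η n r * v / r) * ((θ₁ - θ₂) * (G₁ - G₂)) := hrw
    _ ≤ (phiDamp η n r * v / r) * (θ₁ - θ₂) ^ 2 := mul_le_mul_of_nonneg_left key hc0
    _ ≤ (v / (η - 1 / (n : ℝ))) * (θ₁ - θ₂) ^ 2 :=
        mul_le_mul_of_nonneg_right hcC (sq_nonneg _)
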